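/- For every element h of H, the number of fixed points of h on {1,...,14} belongs to the set {0, 2, 6, 14}. -/

import Mathlib

open Equiv

/-- Generators of `H` (points `1,…,14` of the paper are `0,…,13` here). -/
def Hgens : Set (Equiv.Perm (Fin 14)) :=
  {c[0, 1, 2, 3, 4, 5, 6] * c[13, 12, 11, 10, 9, 8, 7],
   c[0, 3, 6, 8, 13, 10, 7, 5] * c[1, 4, 12, 9]}

def H : Subgroup (Equiv.Perm (Fin 14)) := Subgroup.closure Hgens

namespace HFP

def d (c i : ℕ) : ℕ := c / 14 ^ i % 14

def enc (f : Fin 14 → Fin 14) : ℕ :=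
  ((f 0).val) + 14 * (((f 1).val) + 14 * (((f 2).val) + 14 * (((f 3).val) + 14 * (((f 4).val) + 14 * (((f 5).val) + 14 * (((f 6).val) + 14 * (((f 7).val) + 14 * (((f 8).val) + 14 * (((f 9).val) + 14 * (((f 10).val) + 14 * (((f 11).val) + 14 * (((f 12).val) + 14 * (((f 13).val))))))))))))))

lemma d0 (f : Fin 14 → Fin 14) : d (enc f) 0 = (f 0).val := by
  have h0 := (f 0).isLt; have h1 := (f 1).isLt; have h2 := (f 2).isLt; have h3 := (f 3).isLt; have h4 := (f 4).isLt; have h5 := (f 5).isLt; have h6 := (f 6).isLt; have h7 := (f 7).isLt; have h8 := (f 8).isLt; have h9 := (f 9).isLt; have h10 := (f 10).isLt; have h11 := (f 11).isLt; have h12 := (f 12).isLt; have h13 := (f 13).isLt;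
  unfold enc d; norm_num; try omega

lemma d1 (f : Fin 14 → Fin 14) : d (enc f) 1 = (f 1).val := by
  have h0 := (f 0).isLt; have h1 := (f 1).isLt; have h2 := (f 2).isLt; have h3 := (f 3).isLt; have h4 := (f 4).isLt; have h5 := (f 5).isLt; have h6 := (f 6).isLt; have h7 := (f 7).isLt; have h8 := (f 8).isLt; have h9 := (f 9).isLt; have h10 := (f 10).isLt; have h11 := (f 11).isLt; have h12 := (f 12).isLt; have h13 := (f 13).isLt;
  unfold enc d; norm_num; try omega

lemma d2 (f : Fin 14 → Fin 14) : d (enc f) 2 = (f 2).val := by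
  have h0 := (f 0).isLt; have h1 := (f 1).isLt; have h2 := (f 2).isLt; have h3 := (f 3).isLt; have h4 := (f 4).isLt; have h5 := (f 5).isLt; have h6 := (f 6).isLt; have h7 := (f 7).isLt; have h8 := (f 8).isLt; have h9 := (f 9).isLt; have h10 := (f 10).isLt; have h11 := (f 11).isLt; have h12 := (f 12).isLt; have h13 := (f 13).isLt;
  unfold enc d; norm_num; try omega

lemma d3 (f : Fin 14 → Fin 14) : d (enc f) 3 = (f 3).val := by
  have h0 := (f 0).isLt; have h1 := (f 1).isLt; have h2 := (f 2).isLt; have h3 := (f 3).isLt; have h4 := (f 4).isLt; have h5 := (f 5).isLt; have h6 := (f 6).isLt; have h7 := (f 7).isLt; have h8 := (f 8).isLt; have h9 := (f 9).isLt; have h10 := (f 10).isLt; have h11 := (f 11).isLt; have h12 := (f 12).isLt; have h13 := (f 13).isLt;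
  unfold enc d; norm_num; try omega

lemma d4 (f : Fin 14 → Fin 14) : d (enc f) 4 = (f 4).val := by
  have h0 := (f 0).isLt; have h1 := (f 1).isLt; have h2 := (f 2).isLt; have h3 := (f 3).isLt; have h4 := (f 4).isLt; have h5 := (f 5).isLt; have h6 := (f 6).isLt; have h7 := (f 7).isLt; have h8 := (f 8).isLt; have h9 := (f 9).isLt; have h10 := (f 10).isLt; have h11 := (f 11).isLt; have h12 := (f 12).isLt; have h13 := (f 13).isLt;
  unfold enc d; norm_num; try omega

lemma d5 (f : Fin 14 → Fin 14) : d (enc f) 5 = (f 5).val := by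
  have h0 := (f 0).isLt; have h1 := (f 1).isLt; have h2 := (f 2).isLt; have h3 := (f 3).isLt; have h4 := (f 4).isLt; have h5 := (f 5).isLt; have h6 := (f 6).isLt; have h7 := (f 7).isLt; have h8 := (f 8).isLt; have h9 := (f 9).isLt; have h10 := (f 10).isLt; have h11 := (f 11).isLt; have h12 := (f 12).isLt; have h13 := (f 13).isLt;
  unfold enc d; norm_num; try omega

lemma d6 (f : Fin 14 → Fin 14) : d (enc f) 6 = (f 6).val := by
  have h0 := (f 0).isLt; have h1 := (f 1).isLt; have h2 := (f 2).isLt; have h3 := (f 3).isLt; have h4 := (f 4).isLt; have h5 := (f 5).isLt; have h6 := (f 6).isLt; have h7 := (f 7).isLt; have h8 := (f 8).isLt; have h9 := (f 9).isLt; have h10 := (f 10).isLt; have h11 := (f 11).isLt; have h12 := (f 12).isLt; have h13 := (f 13).isLt;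
  unfold enc d; norm_num; try omega

lemma d7 (f : Fin 14 → Fin 14) : d (enc f) 7 = (f 7).val := by
  have h0 := (f 0).isLt; have h1 := (f 1).isLt; have h2 := (f 2).isLt; have h3 := (f 3).isLt; have h4 := (f 4).isLt; have h5 := (f 5).isLt; have h6 := (f 6).isLt; have h7 := (f 7).isLt; have h8 := (f 8).isLt; have h9 := (f 9).isLt; have h10 := (f 10).isLt; have h11 := (f 11).isLt; have h12 := (f 12).isLt; have h13 := (f 13).isLt;
  unfold enc d; norm_num; try omega

lemma d8 (f : Fin 14 → Fin 14) : d (enc f) 8 = (f 8).val := by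
  have h0 := (f 0).isLt; have h1 := (f 1).isLt; have h2 := (f 2).isLt; have h3 := (f 3).isLt; have h4 := (f 4).isLt; have h5 := (f 5).isLt; have h6 := (f 6).isLt; have h7 := (f 7).isLt; have h8 := (f 8).isLt; have h9 := (f 9).isLt; have h10 := (f 10).isLt; have h11 := (f 11).isLt; have h12 := (f 12).isLt; have h13 := (f 13).isLt;
  unfold enc d; norm_num; try omega

lemma d9 (f : Fin 14 → Fin 14) : d (enc f) 9 = (f 9).val := by
  have h0 := (f 0).isLt; have h1 := (f 1).isLt; have h2 := (f 2).isLt; have h3 := (f 3).isLt; have h4 := (f 4).isLt; have h5 := (f 5).isLt; have h6 := (f 6).isLt; have h7 := (f 7).isLt; have h8 := (f 8).isLt; have h9 := (f 9).isLt; have h10 := (f 10).isLt; have h11 := (f 11).isLt; have h12 := (f 12).isLt; have h13 := (f 13).isLt;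
  unfold enc d; norm_num; try omega

lemma d10 (f : Fin 14 → Fin 14) : d (enc f) 10 = (f 10).val := by
  have h0 := (f 0).isLt; have h1 := (f 1).isLt; have h2 := (f 2).isLt; have h3 := (f 3).isLt; have h4 := (f 4).isLt; have h5 := (f 5).isLt; have h6 := (f 6).isLt; have h7 := (f 7).isLt; have h8 := (f 8).isLt; have h9 := (f 9).isLt; have h10 := (f 10).isLt; have h11 := (f 11).isLt; have h12 := (f 12).isLt; have h13 := (f 13).isLt;
  unfold enc d; norm_num; try omega

lemma d11 (f : Fin 14 → Fin 14) : d (enc f) 11 = (f 11).val := by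
  have h0 := (f 0).isLt; have h1 := (f 1).isLt; have h2 := (f 2).isLt; have h3 := (f 3).isLt; have h4 := (f 4).isLt; have h5 := (f 5).isLt; have h6 := (f 6).isLt; have h7 := (f 7).isLt; have h8 := (f 8).isLt; have h9 := (f 9).isLt; have h10 := (f 10).isLt; have h11 := (f 11).isLt; have h12 := (f 12).isLt; have h13 := (f 13).isLt;
  unfold enc d; norm_num; try omega

lemma d12 (f : Fin 14 → Fin 14) : d (enc f) 12 = (f 12).val := by
  have h0 := (f 0).isLt; have h1 := (f 1).isLt; have h2 := (f 2).isLt; have h3 := (f 3).isLt; have h4 := (f 4).isLt; have h5 := (f 5).isLt; have h6 := (f 6).isLt; have h7 := (f 7).isLt; have h8 := (f 8).isLt; have h9 := (f 9).isLt; have h10 := (f 10).isLt; have h11 := (f 11).isLt; have h12 := (f 12).isLt; have h13 := (f 13).isLt;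
  unfold enc d; norm_num; try omega

lemma d13 (f : Fin 14 → Fin 14) : d (enc f) 13 = (f 13).val := by
  have h0 := (f 0).isLt; have h1 := (f 1).isLt; have h2 := (f 2).isLt; have h3 := (f 3).isLt; have h4 := (f 4).isLt; have h5 := (f 5).isLt; have h6 := (f 6).isLt; have h7 := (f 7).isLt; have h8 := (f 8).isLt; have h9 := (f 9).isLt; have h10 := (f 10).isLt; have h11 := (f 11).isLt; have h12 := (f 12).isLt; have h13 := (f 13).isLt;
  unfold enc d; norm_num; try omega

def stepA (c : ℕ) : ℕ :=
  (d c 1) + 14 * ((d c 2) + 14 * ((d c 3) + 14 * ((d c 4) + 14 * ((d c 5) + 14 * ((d c 6) + 14 * ((d c 0) + 14 * ((d c 13) + 14 * ((d c 7) + 14 * ((d c 8) + 14 * ((d c 9) + 14 * ((d c 10) + 14 * ((d c 11) + 14 * ((d c 12))))))))))))))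

def stepB (c : ℕ) : ℕ :=
  (d c 3) + 14 * ((d c 4) + 14 * ((d c 2) + 14 * ((d c 6) + 14 * ((d c 12) + 14 * ((d c 0) + 14 * ((d c 8) + 14 * ((d c 5) + 14 * ((d c 13) + 14 * ((d c 1) + 14 * ((d c 7) + 14 * ((d c 11) + 14 * ((d c 9) + 14 * ((d c 10))))))))))))))

def stepAi (c : ℕ) : ℕ :=
  (d c 6) + 14 * ((d c 0) + 14 * ((d c 1) + 14 * ((d c 2) + 14 * ((d c 3) + 14 * ((d c 4) + 14 * ((d c 5) + 14 * ((d c 8) + 14 * ((d c 9) + 14 * ((d c 10) + 14 * ((d c 11) + 14 * ((d c 12) + 14 * ((d c 13) + 14 * ((d c 7))))))))))))))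

def stepBi (c : ℕ) : ℕ :=
  (d c 5) + 14 * ((d c 9) + 14 * ((d c 2) + 14 * ((d c 0) + 14 * ((d c 1) + 14 * ((d c 7) + 14 * ((d c 3) + 14 * ((d c 10) + 14 * ((d c 6) + 14 * ((d c 12) + 14 * ((d c 13) + 14 * ((d c 11) + 14 * ((d c 4) + 14 * ((d c 8))))))))))))))


inductive T where
  | leaf : T
  | node : T → ℕ → T → T

def mem (c : ℕ) : T → Bool
  | .leaf => false
  | .node l v r => if c < v then mem c l else if v < c then mem c r else true

def tall (p : ℕ → Bool) : T → Bool
  | .leaf => true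
  | .node l v r => p v && tall p l && tall p r

lemma tall_imp (p : ℕ → Bool) (t : T) (h : tall p t = true) :
    ∀ c, mem c t = true → p c = true := by
  induction t with
  | leaf => intro c hc; simp [mem] at hc
  | node l v r ihl ihr =>
    simp only [tall, Bool.and_eq_true] at h
    intro c hc
    simp only [mem] at hc
    split at hc
    · exact ihl h.1.2 c hc
    · split at hc
      · exact ihr h.2 c hc
      · have hcv : c = v := by omega
        subst hcv
        exact h.1.1

def t : T := (.node (.node (.node (.node (.node (.node (.node (.node (.node (.node .leaf 67879705169289 .leaf) 75837256836081 (.node .leaf 79995636516445 (.node .leaf 83993357142617 .leaf))) 88113162549061 (.node (.node .leaf 92110883175233 .leaf) 96269262855597 (.node .leaf 104226814522389 (.node .leaf 119557702782167 .leaf)))) 127740071450095 (.node (.node (.node .leaf 131864114333419 .leaf) 135724388389239 (.node .leaf 148034428139611 (.node .leaf 151894702195431 .leaf))) 156018745078755 (.node (.node .leaf 164201113746683 (.node .leaf 178580118765061 .leaf)) 186730995763325 (.node .leaf 190855437174233 (.node .leaf 194763130019653 .leaf))))) 198912455432977 (.node (.node (.node (.node .leaf 202820148278397 .leaf) 206944589689305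 (.node .leaf 215095466687569 (.node .leaf 233376458741075 .leaf))) 237225021179887 (.node (.node .leaf 241365502077531 .leaf) 253611692015695 (.node .leaf 257501283318747 (.node .leaf 269747473256911 .leaf)))) 273887954154555 (.node (.node (.node .leaf 277736516593367 .leaf) 288804146460661 (.node .leaf 292950814524017 (.node .leaf 296827128066573 .leaf))) 309176630537697 (.node (.node .leaf 313010132329453 (.node .leaf 325359634800577 .leaf)) 329235948343133 (.node .leaf 333382616406489 (.node .leaf 344971198306839 .leaf)))))) 353084207693503 (.node (.node (.node (.node (.node .leaf 357004590995611 .leaf) 361025719873559 (.node .leaf 373391849135227 (.node .leaf 377412978013175 .leaf))) 381333361315283 (.node (.node .leaf 389446370701947 .leaf) 404199043270945 (.node .leaf 412282532650729 (.node .leaf 416462650063109 .leaf)))) 420539868452353 (.node (.node (.node .leaf 432472109047173 .leaf) 436549327436417 (.node .leaf 440729444848797 (.node .leaf 448812934228581 .leaf))) 460366095117123 (.node (.node .leaf 464317970088895 (.node .leaf 468539612277659 .leaf)) 480487696591279 (.node .leaf 484755087049883 (.node .leaf 496703171363503 .leaf))))) 500924813552267 (.node (.node (.node (.node .leaf 504876688524039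 .leaf) 515793782836709 (.node .leaf 520043763433025 (.node .leaf 524001238266701 .leaf))) 536052635113281 (.node (.node .leaf 540263936060589 .leaf) 552315332907169 (.node .leaf 556272807740845 (.node .leaf 560522788337161 .leaf)))) 578688665847851 (.node (.node (.node .leaf 586736245295395 .leaf) 590710151151679 (.node .leaf 594901197109323 (.node .leaf 598852763946359 .leaf))) 603043809904003 (.node (.node .leaf 607017715760287 (.node .leaf 615065295207831 .leaf)) 629612538795617 (.node .leaf 637626668894137 (.node .leaf 641603126725301 .leaf))))))) 645841199936673 (.node (.node (.node (.node (.node (.node .leaf 657829530042789 .leaf) 662067603254161 (.node .leaf 666044061085325 (.node .leaf 674058191183845 .leaf))) 689389079443623 (.node (.node .leaf 697629984222639 .leaf) 701569951809467 (.node .leaf 705670969986359 (.node .leaf 709652056830275 .leaf)))) 713753075007167 (.node (.node (.node .leaf 717693042593995 .leaf) 725933947373011 (.node .leaf 802839082987422 (.node .leaf 810955238644486 .leaf))) 814916748195394 (.node (.node .leaf 818935122338814 (.node .leaf 823163553979338 .leaf)) 827181928122758 (.node .leaf 831143437673666 (.node .leaf 839259593330730 .leaf))))) 909837631246570 (.node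 (.node (.node (.node .leaf 922030102862622 .leaf) 930035667614534 (.node .leaf 934287221346050 (.node .leaf 938058160300014 .leaf))) 942309714031530 (.node (.node .leaf 950315278783442 .leaf) 962507750399494 (.node .leaf 975770569367620 (.node .leaf 983911811786748 .leaf)))) 988038609404600 (.node (.node (.node .leaf 991940401245092 .leaf) 996106842369392 (.node .leaf 1000008634209884 (.node .leaf 1004135431827736 .leaf))) 1012276674246864 (.node (.node .leaf 1021182962925606 (.node .leaf 1033350347779594 .leaf)) 1041600894129458 (.node .leaf 1045573527993566 (.node .leaf 1049497938022378 .leaf)))))) 1053470571886486 (.node (.node (.node (.node (.node .leaf 1061721118236350 .leaf) 1073888503090338 (.node .leaf 1079411693600448 (.node .leaf 1087515844488008 .leaf))) 1091413790387492 (.node (.node .leaf 1095412105309184 .leaf) 1115939731979644 (.node .leaf 1119938046901336 (.node .leaf 1123835992800820 .leaf)))) 1131940143688380 (.node (.node (.node .leaf 1135558091929378 .leaf) 1143429063228842 (.node .leaf 1147676771019350 (.node .leaf 1151604243917426 .leaf))) 1171978399513038 (.node (.node .leaf 1175905872411114 (.node .leaf 1180153580201622 .leaf)) 1188024551501086 (.node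 .leaf 1192941195442204 (.node .leaf 1201269659428228 .leaf))))) 1205121865048400 (.node (.node (.node (.node .leaf 1209291369041964 .leaf) 1229414627052456 (.node .leaf 1233584131046020 (.node .leaf 1237436336666192 .leaf))) 1245764800652216 (.node (.node .leaf 1249087593771134 .leaf) 1257182878169062 (.node .leaf 1261384845680258 (.node .leaf 1265483507650206 .leaf)))) 1285453294585850 (.node (.node (.node .leaf 1289551956555798 .leaf) 1293753924066994 (.node .leaf 1301849208464922 (.node .leaf 1307316324445976 .leaf))) 1319448288288156 (.node (.node .leaf 1327394828008548 (.node .leaf 1331520932947504 .leaf)) 1335696240561436 (.node .leaf 1339822345500392 (.node .leaf 1347768885220784 .leaf)))))))) 1359900849062964 (.node (.node (.node (.node (.node (.node (.node .leaf 1368928153289450 .leaf) 1376983801172642 (.node .leaf 1380957112733406 (.node .leaf 1385154059695978 .leaf))) 1389087336214422 (.node (.node .leaf 1393284283176994 .leaf) 1397257594737758 (.node .leaf 1405313242620950 (.node .leaf 1418661656125012 .leaf)))) 1430768533205128 (.node (.node (.node .leaf 1438960054523472 .leaf) 1442807239595020 (.node .leaf 1447136018283800 (.node .leaf 1450983203355348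 .leaf))) 1459174724673692 (.node (.node .leaf 1471281601753808 (.node .leaf 1541859639669648 .leaf)) 1549940374314904 (.node .leaf 1554078973942612 (.node .leaf 1558159338602256 .leaf))))) 1562030624604476 (.node (.node (.node (.node .leaf 1566110989264120 .leaf) 1570249588891828 (.node .leaf 1578330323537084 (.node .leaf 1593429122880361 .leaf))) 1601341220428625 (.node (.node .leaf 1605544655699933 .leaf) 1609513646382681 (.node .leaf 1621750104357149 (.node .leaf 1625719095039897 .leaf)))) 1629922530311205 (.node (.node (.node .leaf 1637834627859469 .leaf) 1645354955244767 (.node .leaf 1657708981353555 (.node .leaf 1665673329463819 .leaf))) 1669686977209927 (.node (.node .leaf 1673807579671539 (.node .leaf 1677821227417647 .leaf)) 1685785575527911 (.node .leaf 1698139601636699 (.node .leaf 1760087222930803 .leaf)))))) 1763884234478223 (.node (.node (.node (.node (.node .leaf 1776169488609555 .leaf) 1784224436822139 (.node .leaf 1788359806778311 (.node .leaf 1796414754990895 .leaf))) 1808700009122227 (.node (.node .leaf 1812497020669647 .leaf) 1817784675349045 (.node .leaf 1829968980146073 (.node .leaf 1838203396616353 .leaf)))) 1842189007097933 (.node (.node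 (.node .leaf 1846097098470937 .leaf) 1850082708952517 (.node .leaf 1858317125422797 (.node .leaf 1870501430219825 .leaf))) 1871954989385247 (.node (.node .leaf 1875960078776459 (.node .leaf 1887975264547775 .leaf)) 1896326850624791 (.node .leaf 1900140495954467 (.node .leaf 1908492082031483 .leaf))))) 1920507267802799 (.node (.node (.node (.node .leaf 1924512357194011 .leaf) 1935583433937101 (.node .leaf 1943690339559189 (.node .leaf 1947626656972945 .leaf))) 1951628118165037 (.node (.node .leaf 1964012146209425 .leaf) 1968013607401517 (.node .leaf 1971949924815273 (.node .leaf 1980056830437361 .leaf)))) 1988444726049639 (.node (.node (.node .leaf 1996536864177167 .leaf) 2000700460174091 (.node .leaf 2004796367409511 (.node .leaf 2016711100757483 .leaf))) 2020807007992903 (.node (.node .leaf 2024970603989827 (.node .leaf 2033062742117355 .leaf)) 2043974431798429 (.node .leaf 2048068081210281 (.node .leaf 2060351852599261 .leaf))))))) 2068198722968053 (.node (.node (.node (.node (.node (.node .leaf 2072481662994145 .leaf) 2080328533362937 (.node .leaf 2092612304751917 (.node .leaf 2096705954163769 .leaf))) 2098144745834631 (.node (.node .leaf 2110258223590283 .leaf)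 2118221088958195 (.node .leaf 2122336566494911 (.node .leaf 2126525060477675 .leaf)))) 2130640538014391 (.node (.node (.node .leaf 2138603403382303 .leaf) 2150716881137955 (.node .leaf 2155842198252873 (.node .leaf 2160143925508517 .leaf))) 2172157628537481 (.node (.node .leaf 2180301136770705 (.node .leaf 2184262352170301 .leaf)) 2192405860403525 (.node .leaf 2204419563432489 (.node .leaf 2208721290688133 .leaf))))) 2270574465938909 (.node (.node (.node (.node .leaf 2282518222382801 .leaf) 2290751156110729 (.node .leaf 2294838596382917 (.node .leaf 2298814579277073 .leaf))) 2302902019549261 (.node (.node .leaf 2311134953277189 .leaf) 2323078709721081 (.node .leaf 2330599037106379 (.node .leaf 2338885983307731 .leaf)))) 2342782461447103 (.node (.node (.node .leaf 2346910839191867 .leaf) 2358973142609759 (.node .leaf 2363101520354523 (.node .leaf 2366997998493895 .leaf))) 2375284944695247 (.node (.node .leaf 2392873005081156 (.node .leaf 2400982665437772 .leaf)) 2404957354365800 (.node .leaf 2408961961828292 (.node .leaf 2413202391246608 .leaf)))))) 2417206998709100 (.node (.node (.node (.node (.node .leaf 2421181687637128 .leaf) 2429291347993744 (.node .leaf 2446132757892694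 (.node .leaf 2454085981689758 .leaf))) 2458245144441866 (.node (.node .leaf 2462255652909286 .leaf) 2466354413262610 (.node .leaf 2470364921730030 (.node .leaf 2474524084482138 .leaf)))) 2482477308279202 (.node (.node (.node .leaf 2496109564850408 .leaf) 2500121059149220 (.node .leaf 2512444579419736 (.node .leaf 2520546374100352 .leaf))) 2524344063344428 (.node (.node .leaf 2532445858025044 (.node .leaf 2544769378295560 .leaf)) 2548780872594372 (.node .leaf 2610065564655692 (.node .leaf 2614233495514056 .leaf))))) 2618065138009828 (.node (.node (.node (.node .leaf 2630463828173688 .leaf) 2642359277381148 (.node .leaf 2654757967545008 (.node .leaf 2658589610040780 .leaf))) 2662757540899144 (.node (.node .leaf 2667991763417214 .leaf) 2671975220451498 (.node .leaf 2684012437107326 (.node .leaf 2692360681146006 .leaf)))) 2696164286377250 (.node (.node (.node .leaf 2704512530415930 .leaf) 2716549747071758 (.node .leaf 2720533204106042 (.node .leaf 2722705165746072 .leaf))) 2726682721775428 (.node (.node .leaf 2730582240810112 (.node .leaf 2742734481615908 .leaf)) 2755128745526664 (.node .leaf 2767280986332460 (.node .leaf 2771180505367144 .leaf))))))))) 2775158061396500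 (.node (.node (.node (.node (.node (.node (.node (.node .leaf 2780654976553506 .leaf) 2784774201647854 (.node .leaf 2788974791791786 (.node .leaf 2801121116610414 .leaf))) 2813022481805042 (.node (.node .leaf 2825168806623670 .leaf) 2829369396767602 (.node .leaf 2833488621861950 (.node .leaf 2835368378882364 .leaf)))) 2839481702971784 (.node (.node (.node .leaf 2851743247708316 .leaf) 2859592677043700 (.node .leaf 2863889180991072 (.node .leaf 2871738610326456 .leaf))) 2884000155062988 (.node (.node .leaf 2888113479152408 (.node .leaf 2893294577643886 .leaf)) 2897223427909226 (.node .leaf 2901491894592070 (.node .leaf 2913391770052634 .leaf))))) 2925791949950558 (.node (.node (.node (.node .leaf 2937691825411122 .leaf) 2941960292093966 (.node .leaf 2945889142359306 (.node .leaf 3007250577449170 .leaf))) 3011335864274062 (.node (.node .leaf 3023311105395906 .leaf) 3031406984089354 (.node .leaf 3035709404023894 (.node .leaf 3043805282717342 .leaf)))) 3055780523839186 (.node (.node (.node .leaf 3059865810664078 .leaf) 3073424274709204 (.node .leaf 3081669703125884 (.node .leaf 3085610453784456 .leaf))) 3089697705280420 (.node (.node .leaf 3093699054105712 (.node .leaf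 3097786305601676 .leaf)) 3101727056260248 (.node .leaf 3109972484676928 (.node .leaf 3126684027520742 .leaf)))))) 3134773019377870 (.node (.node (.node (.node (.node .leaf 3138898243860522 .leaf) 3142991396361414 (.node .leaf 3146851076121714 (.node .leaf 3150944228622606 .leaf))) 3155069453105258 (.node (.node .leaf 3163158444962386 .leaf) 3180573050426655 (.node .leaf 3184553752726411 (.node .leaf 3188491643275367 .leaf)))) 3200646638815691 (.node (.node (.node .leaf 3204897695636247 .leaf) 3217052691176571 (.node .leaf 3220990581725527 (.node .leaf 3224971284025283 .leaf))) 3234806235932245 (.node (.node .leaf 3247164589910761 (.node .leaf 3255133063131105 .leaf)) 3259155765144253 (.node .leaf 3263247449885033 (.node .leaf 3267270151898181 .leaf))))) 3275238625118525 (.node (.node (.node (.node .leaf 3287596979097041 .leaf) 3288675485815239 (.node .leaf 3300850848712027 (.node .leaf 3308856210704291 .leaf))) 3313115042807999 (.node (.node .leaf 3316890903927211 .leaf) 3321149736030919 (.node .leaf 3329155098023183 (.node .leaf 3341330460919971 .leaf)))) 3346927835492033 (.node (.node (.node .leaf 3350734481618589 .leaf) 3354898175000073 (.node .leaf 3367170535915069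 (.node .leaf 3379115782093025 .leaf))) 3391388143008021 (.node (.node .leaf 3395551836389505 (.node .leaf 3399358482516061 .leaf)) 3466278431241145 (.node .leaf 3470405235850709 (.node .leaf 3474281150865681 .leaf))))))) 3486638323244869 (.node (.node (.node (.node (.node (.node .leaf 3490473209395601 .leaf) 3502830381774789 (.node .leaf 3506706296789761 (.node .leaf 3510833101399325 .leaf))) 3518160682730759 (.node (.node .leaf 3522131149164147 .leaf) 3526021823683151 (.node .leaf 3538201206314931 (.node .leaf 3550562623162711 .leaf)))) 3562742005794491 (.node (.node (.node .leaf 3566632680313495 .leaf) 3570603146746883 (.node .leaf 3572627635701553 (.node .leaf 3576757474214717 .leaf))) 3580963972355289 (.node (.node .leaf 3593084329955549 (.node .leaf 3605017759141409 .leaf)) 3617138116741669 (.node .leaf 3621344614882241 (.node .leaf 3625474453395405 .leaf))))) 3632610192137719 (.node (.node (.node (.node .leaf 3636580560187731 .leaf) 3640804754351375 (.node .leaf 3652745756060739 (.node .leaf 3657008629873391 .leaf))) 3668949631582755 (.node (.node .leaf 3673173825746399 .leaf) 3677144193796411 (.node .leaf 3743860482940279 (.node .leaf 3748154141760275 .leaf))))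 3752087621038367 (.node (.node (.node .leaf 3764115000355411 .leaf) 3776464600211095 (.node .leaf 3788491979528139 (.node .leaf 3792425458806231 .leaf))) 3796719117626227 (.node (.node .leaf 3802112832617073 (.node .leaf 3814235056505029 .leaf)) 3822429325566189 (.node .leaf 3826269036497609 (.node .leaf 3830590935341781 .leaf)))))) 3834430646273201 (.node (.node (.node (.node (.node .leaf 3842624915334361 .leaf) 3854747139222317 (.node .leaf 3855982082500067 (.node .leaf 3867921315306295 .leaf))) 3876152473139375 (.node (.node .leaf 3880228314161355 .leaf) 3884234389383959 (.node .leaf 3888310230405939 (.node .leaf 3896541388239019 .leaf)))) 3908480621045247 (.node (.node (.node .leaf 3918315572952209 .leaf) 3922432043312029 (.node .leaf 3926594261941689 (.node .leaf 3938737440489917 .leaf))) 3942584143632745 (.node (.node .leaf 3954727322180973 (.node .leaf 3958889540810633 .leaf)) 3963006011170453 (.node .leaf 3975450253874814 (.node .leaf 3979423475042730 .leaf))))) 3983355667346406 (.node (.node (.node (.node .leaf 3995531903707786 .leaf) 3999756014470294 (.node .leaf 4011932250831674 (.node .leaf 4015864443135350 .leaf))) 4019837664303266 (.node (.node .leaf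 4027069226456172 .leaf) 4035308648492836 (.node .leaf 4039426797362944 (.node .leaf 4043257747179820 .leaf)))) 4063682467835432 (.node (.node (.node .leaf 4067513417652308 .leaf) 4071631566522416 (.node .leaf 4079870988559080 (.node .leaf 4084996892977806 .leaf))) 4088987139463850 (.node (.node .leaf 4101310862494014 (.node .leaf 4109427402695238 .leaf)) 4113214674288434 (.node .leaf 4121331214489658 (.node .leaf 4133654937519822 .leaf)))))))) 4137645184005866 (.node (.node (.node (.node (.node (.node (.node .leaf 4139493357929280 .leaf) 4143297647848892 (.node .leaf 4155578581102208 (.node .leaf 4163615427772424 .leaf))) 4167786399526100 (.node (.node .leaf 4175823246196316 .leaf) 4188104179449632 (.node .leaf 4191908469369244 (.node .leaf 4199631470504366 .leaf)))) 4203479242879722 (.node (.node (.node .leaf 4207640181526678 .leaf) 4219871024657002 (.node .leaf 4223761608783158 (.node .leaf 4235992451913482 .leaf))) 4240153390560438 (.node (.node .leaf 4244001162935794 (.node .leaf 4312441079564150 .leaf)) 4320321888202398 (.node .leaf 4324562520380362 (.node .leaf 4328471695968134 .leaf))))) 4348878698626722 (.node (.node (.node (.node .leaf 4352787874214494 .leaf)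 4357028506392458 (.node .leaf 4364909315030706 (.node .leaf 4365777568448192 .leaf))) 4374095216255752 (.node (.node .leaf 4377952148273236 .leaf) 4382141711488528 (.node .leaf 4402232905507788 (.node .leaf 4406422468723080 .leaf)))) 4410279400740564 (.node (.node (.node .leaf 4418597048548124 .leaf) 4486685720543104 (.node .leaf 4490937861578428 (.node .leaf 4494874487126920 .leaf))) 4506942992692764 (.node (.node .leaf 4511149385458248 (.node .leaf 4523217891024092 .leaf)) 4527154516572584 (.node .leaf 4531406657607908 (.node .leaf 4538725290083062 .leaf)))))) 4543019543198578 (.node (.node (.node (.node (.node .leaf 4555034826354454 .leaf) 4563198589577342 (.node .leaf 4567124594715306 (.node .leaf 4575288357938194 .leaf))) 4587303641094070 (.node (.node .leaf 4591597894209586 .leaf) 4593221755034536 (.node .leaf 4597330051583620 (.node .leaf 4609302544962648 .leaf)))) 4617386614654528 (.node (.node (.node .leaf 4621696319952972 .leaf) 4629780389644852 (.node .leaf 4641752883023880 (.node .leaf 4645861179572964 .leaf))) 4651149421556170 (.node (.node .leaf 4659108455965314 (.node .leaf 4663087871290654 .leaf)) 4667355660276842 (.node .leaf 4687429136299078 (.node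 .leaf 4691696925285266 .leaf))))) 4695676340610606 (.node (.node (.node (.node .leaf 4703635375019750 .leaf) 4710866937172656 (.node .leaf 4714993629415420 (.node .leaf 4719159001307192 .leaf))) 4731282113641980 (.node (.node .leaf 4735154979771112 .leaf) 4747278092105900 (.node .leaf 4751443463997672 (.node .leaf 4755570156240436 .leaf)))) 4769733405442733 (.node (.node (.node .leaf 4777652585595253 .leaf) 4781852091524417 (.node .leaf 4785805539631389 (.node .leaf 4798068943663905 .leaf))) 4802022391770877 (.node (.node .leaf 4806221897700041 (.node .leaf 4814141077852561 .leaf)) 4821373031541339 (.node .leaf 4829596526458067 (.node .leaf 4833717814606863 .leaf))))))) 4837536570878011 (.node (.node (.node (.node (.node (.node .leaf 4857990209254455 .leaf) 4861808965525603 (.node .leaf 4865930253674399 (.node .leaf 4874153748591127 .leaf))) 4879813987717305 (.node (.node .leaf 4888009137234769 .leaf) 4892130432375277 (.node .leaf 4895999753706425 (.node .leaf 4908286776740893 .leaf)))) 4912156098072041 (.node (.node (.node .leaf 4916277393212549 .leaf) 4924472542730013 (.node .leaf 4935230159014519 (.node .leaf 4939040349939059 .leaf))) 4943177684566303 (.node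 (.node .leaf 4955468147023667 (.node .leaf 4967412791914391 .leaf)) 4979703254371755 (.node .leaf 4983840588998999 (.node .leaf 4987650779923539 .leaf))))) 4990038015412905 (.node (.node (.node (.node .leaf 4994228955995461 .leaf) 4998063751753345 (.node .leaf 5010451625738741 (.node .leaf 5022346082123097 .leaf))) 5034733956108493 (.node (.node .leaf 5038568751866377 .leaf) 5042759692448933 (.node .leaf 5046249339778283 (.node .leaf 5054359202894547 .leaf)))) 5058238459947855 (.node (.node (.node .leaf 5062262343560331 .leaf) 5082766170443143 (.node .leaf 5086790054055619 (.node .leaf 5090669311108927 .leaf))) 5098779174225191 (.node (.node .leaf 5219399246278217 (.node .leaf 5227485490392529 .leaf)) 5231707125589581 (.node .leaf 5235781197708425 (.node .leaf 5255774392895845 .leaf)))))) 5259848465014689 (.node (.node (.node (.node (.node .leaf 5264070100211741 .leaf) 5272156344326053 (.node .leaf 5275610570643595 (.node .leaf 5279518173096167 .leaf))) 5283780941533731 (.node (.node .leaf 5295690654333079 .leaf) 5308095742412827 (.node .leaf 5320005455212175 (.node .leaf 5324268223649739 .leaf)))) 5328175826102311 (.node (.node (.node .leaf 5330418427041981 .leaf)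 5334706779152569 (.node .leaf 5338667008720773 (.node .leaf 5350674133048153 .leaf))) 5363029032621533 (.node (.node .leaf 5375036156948913 (.node .leaf 5378996386517117 .leaf)) 5383284738627705 (.node .leaf 5393933141374323 (.node .leaf 5401936448302667 .leaf))))) 5405913108893479 (.node (.node (.node (.node .leaf 5410142526365395 .leaf) 5422155047795031 (.node .leaf 5426384465266947 (.node .leaf 5430361125857759 .leaf))) 5438364432786103 (.node (.node .leaf 5444275554515161 .leaf) 5452248166829009 (.node .leaf 5456227770930573 (.node .leaf 5460506970390745 .leaf)))) 5480550354084533 (.node (.node (.node .leaf 5484829553544705 .leaf) 5488809157646269 (.node .leaf 5496781769960117 (.node .leaf 5504013723648895 .leaf))) 5512292999942183 (.node (.node .leaf 5516191449744339 (.node .leaf 5520336740440431 .leaf)) 5532372880872019 (.node .leaf 5536518171568111 (.node .leaf 5540416621370267 .leaf)))))))))) 5548695897663555 (.node (.node (.node (.node (.node (.node (.node (.node (.node .leaf 5560851969431044 .leaf) 5568759151805772 (.node .leaf 5572948030332696 (.node .leaf 5576928424497716 .leaf))) 5589169021565688 (.node (.node .leaf 5593149415730708 .leaf) 5597338294257632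 (.node .leaf 5605245476632360 (.node .leaf 5614211783626914 .leaf)))) 5622434481488474 (.node (.node (.node .leaf 5626577611745558 .leaf) 5630403443629250 (.node .leaf 5650817355098110 (.node .leaf 5654643186981802 .leaf))) 5658786317238886 (.node (.node .leaf 5667009015100446 (.node .leaf 5677299104557184 .leaf)) 5685467503784536 (.node .leaf 5689610627049908 (.node .leaf 5693468537907072 .leaf))))) 5705768160006564 (.node (.node (.node (.node .leaf 5709626070863728 .leaf) 5713769194129100 (.node .leaf 5721937593356452 (.node .leaf 5727502203805486 .leaf))) 5731295279019050 (.node (.node .leaf 5735463684814422 .leaf) 5747718545474282 (.node .leaf 5759699393449742 (.node .leaf 5771954254109602 .leaf)))) 5776122659904974 (.node (.node (.node .leaf 5779915735118538 .leaf) 5785792918040512 (.node .leaf 5789949039897308 (.node .leaf 5793800154311000 .leaf))) 5806205535543244 (.node (.node .leaf 5818071283958128 (.node .leaf 5830476665190372 .leaf)) 5834327779604064 (.node .leaf 5838483901460860 (.node .leaf 5843134706492642 .leaf)))))) 5851264426070986 (.node (.node (.node (.node (.node .leaf 5855153723222726 .leaf) 5859146325915714 (.node .leaf 5879675336945150 (.node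 .leaf 5883667939638138 .leaf))) 5887557236789878 (.node (.node .leaf 5895686956368222 .leaf) 6009941664160720 (.node .leaf 6018012358707544 (.node .leaf 6022220429983316 .leaf)))) 6026328132236880 (.node (.node (.node .leaf 6046293402526572 .leaf) 6050401104780136 (.node .leaf 6054609176055908 (.node .leaf 6062679870602732 .leaf))) 6067283452612850 (.node (.node .leaf 6071227048398798 (.node .leaf 6075476630467530 .leaf)) 6087368444484158 (.node .leaf 6099797933638786 (.node .leaf 6111689747655414 .leaf))))) 6115939329724146 (.node (.node (.node (.node .leaf 6119882925510094 .leaf) 6125574166847876 (.node .leaf 6129880809277056 (.node .leaf 6133813099964108 .leaf))) 6145855434553120 (.node (.node .leaf 6158169824147172 .leaf) 6170212158736184 (.node .leaf 6174144449423236 (.node .leaf 6178451091852416 .leaf)))) 6183876983738922 (.node (.node (.node .leaf 6191906649421506 .leaf) 6195863831102686 (.node .leaf 6200105442120330 (.node .leaf 6212101057590350 .leaf))) 6216342668607994 (.node (.node .leaf 6220299850289174 (.node .leaf 6228329515971758 .leaf)) 6238864587026448 (.node .leaf 6246842303290056 (.node .leaf 6250796541460484 .leaf))))))) 6255071014523344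 (.node (.node (.node (.node (.node (.node .leaf 6275151384373612 .leaf) 6279425857436472 (.node .leaf 6283380095606900 (.node .leaf 6291357811870508 .leaf))) 6300324118865062 (.node (.node .leaf 6308615001400270 .leaf) 6312526427819898 (.node .leaf 6316645555529686 (.node .leaf 6328700196031226 .leaf)))) 6332819323741014 (.node (.node (.node .leaf 6336730750160642 .leaf) 6345021632695850 (.node .leaf 6355135120998963 (.node .leaf 6359137064119775 .leaf))) 6363056070054619 (.node (.node .leaf 6375218546726783 (.node .leaf 6379465464453835 .leaf)) 6391627941125999 (.node .leaf 6395546947060843 (.node .leaf 6399548890181655 .leaf))))) 6408515588712081 (.node (.node (.node (.node .leaf 6416722359453705 .leaf) 6420868628989477 (.node .leaf 6424682267327441 (.node .leaf 6445125096517133 .leaf))) 6448938734855097 (.node (.node .leaf 6453085004390869 .leaf) 6461291775132493 (.node .leaf 6464099712991219 (.node .leaf 6468125952810639 .leaf)))) 6480430196931171 (.node (.node (.node .leaf 6488553239424555 .leaf) 6492327911952727 (.node .leaf 6500450954446111 (.node .leaf 6512755198566643 .leaf))) 6516781438386063 (.node (.node .leaf 6523239004890725 (.node .leaf 6527037981109217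 .leaf)) 6539343692989861 (.node .leaf 6547381140947309 (.node .leaf 6551515909616249 .leaf)))))) 6559553357573697 (.node (.node (.node (.node (.node .leaf 6571859069454341 .leaf) 6575658045672833 (.node .leaf 6584546525388403 (.node .leaf 6588384663184623 .leaf))) 6592529464960283 (.node (.node .leaf 6604761300913711 .leaf) 6608680593009339 (.node .leaf 6620912428962767 (.node .leaf 6625057230738427 .leaf)))) 6628895368534647 (.node (.node (.node .leaf 6690413435490811 .leaf) 6698276345346339 (.node .leaf 6702506741657935 (.node .leaf 6706448764308683 .leaf))) 6726826667461927 (.node (.node .leaf 6730768690112675 (.node .leaf 6734999086424271 .leaf)) 6742861996279799 (.node .leaf 6750092873206709 (.node .leaf 6758428028261117 .leaf))))) 6762298328431945 (.node (.node (.node (.node .leaf 6766455827656005 .leaf) 6786571031214273 (.node .leaf 6790728530438333 (.node .leaf 6794598830609161 .leaf))) 6802933985663569 (.node (.node .leaf 6864059500951861 .leaf) 6868319710422833 (.node .leaf 6872275605129597 (.node .leaf 6884339202513617 .leaf)))) 6888521194204221 (.node (.node (.node .leaf 6900584791588241 .leaf) 6904540686295005 (.node .leaf 6908800895765977 (.node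 .leaf 6917267303806795 .leaf))) 6921568045231047 (.node (.node .leaf 6933560898974827 (.node .leaf 6941719362480019 .leaf)) 6945685877597311 (.node .leaf 6953844341102503 (.node .leaf 6965837194846283 .leaf)))))))) 6970137936270535 (.node (.node (.node (.node (.node (.node (.node .leaf 6976406595706301 .leaf) 6980480073529625 (.node .leaf 6992474395033517 (.node .leaf 7000547264002773 .leaf))) 7004873875260833 (.node (.node .leaf 7012946744230089 .leaf) 7024941065733981 (.node .leaf 7029014543557305 (.node .leaf 7031990719985439 .leaf)))) 7039982014153751 (.node (.node (.node .leaf 7043936441100403 .leaf) 7048222324637247 (.node .leaf 7068272602159067 (.node .leaf 7072558485695911 .leaf))) 7076512912642563 (.node (.node .leaf 7084504206810875 (.node .leaf 7093470905341301 .leaf)) 7097567309487681 (.node .leaf 7101749000035261 (.node .leaf 7113881956700545 .leaf))))) 7117736322759725 (.node (.node (.node (.node .leaf 7129869279425009 .leaf) 7134050969972589 (.node .leaf 7138147374118969 (.node .leaf 7150012324447122 .leaf))) 7154006786436094 (.node (.node .leaf 7157920094125658 .leaf) 7170103811618878 (.node .leaf 7174323783287882 (.node .leaf 7186507500781102 .leaf))))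 7190420808470666 (.node (.node (.node .leaf 7194415270459638 .leaf) 7200778579236008 (.node .leaf 7213130836441660 (.node .leaf 7221112691798772 .leaf))) 7225106476091088 (.node (.node .leaf 7229237887739452 (.node .leaf 7233231672031768 .leaf)) 7241213527388880 (.node .leaf 7253565784594532 (.node .leaf 7260421120153786 .leaf)))))) 7272625792307278 (.node (.node (.node (.node (.node .leaf 7280612080909206 .leaf) 7284865599311794 (.node .leaf 7288651682313950 (.node .leaf 7292905200716538 .leaf))) 7300891489318466 (.node (.node .leaf 7313096161471958 .leaf) 7315804527327972 (.node .leaf 7319601147339520 (.node .leaf 7323743194380652 .leaf)))) 7336016156582880 (.node (.node (.node .leaf 7347996403271108 .leaf) 7360269365473336 (.node .leaf 7364411412514468 (.node .leaf 7368208032526016 .leaf))) 7431080779318508 (.node (.node .leaf 7435218393114824 (.node .leaf 7439111032304900 .leaf)) 7451464471109880 (.node .leaf 7455274173113988 (.node .leaf 7467627611918968 .leaf))))) 7471520251109044 (.node (.node (.node (.node .leaf 7475657864905360 .leaf) 7484693832324202 (.node .leaf 7488698530179542 (.node .leaf 7492576409865586 .leaf))) 7504735740267350 (.node (.node .leaf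 7517126256620474 .leaf) 7529285587022238 (.node .leaf 7533163466708282 (.node .leaf 7537168164563622 .leaf)))) 7543242805953348 (.node (.node (.node .leaf 7547336063829328 .leaf) 7551559272161580 (.node .leaf 7563694983561392 (.node .leaf 7575604403208244 .leaf))) 7587740114608056 (.node (.node .leaf 7591963322940308 (.node .leaf 7596056580816288 .leaf)) 7604953814690362 (.node .leaf 7608917288912342 (.node .leaf 7613122801221522 .leaf))))))) 7625065970361606 (.node (.node (.node (.node (.node (.node .leaf 7629356769071986 .leaf) 7641299938212070 (.node .leaf 7645505450521250 (.node .leaf 7649468924743230 .leaf))) 7712132110949578 (.node (.node .leaf 7716433446669350 .leaf) 7720392487646514 (.node .leaf 7732414567245862 (.node .leaf 7744734256557610 .leaf)))) 7756756336156958 (.node (.node (.node .leaf 7760715377134122 .leaf) 7765016712853894 (.node .leaf 7767515518123764 (.node .leaf 7779608041219144 .leaf))) 7787818642919536 (.node (.node .leaf 7791664842159692 (.node .leaf 7795979259872024 .leaf)) 7799825459112180 (.node .leaf 7808036060812572 (.node .leaf 7820128583907952 .leaf))))) 7827158059041542 (.node (.node (.node (.node .leaf 7839102997084762 .leaf) 7847318032029970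 (.node .leaf 7851423965380398 (.node .leaf 7855393054446522 .leaf))) 7859498987796950 (.node (.node .leaf 7867714022742158 .leaf) 7879658960785378 (.node .leaf 7886022269561748 (.node .leaf 7890128895591072 .leaf)))) 7894313739400764 (.node (.node (.node .leaf 7906426629852608 .leaf) 7910307158898092 (.node .leaf 7922420049349936 (.node .leaf 7926604893159628 .leaf))) 7930711519188952 (.node (.node .leaf 7945687534081349 (.node .leaf 7953817456419341 .leaf)) 7957776609763305 (.node .leaf 7961788488606277 (.node .leaf 7966019087677521 .leaf)))))) 7970030966520493 (.node (.node (.node (.node (.node .leaf 7973990119864457 .leaf) 7982120042202449 (.node .leaf 8005898250053847 (.node .leaf 8013854032817503 .leaf))) 8018000610488011 (.node (.node .leaf 8022006588326055 .leaf) 8026130924361875 (.node .leaf 8030136902199919 (.node .leaf 8034283479870427 .leaf)))) 8042239262634083 (.node (.node (.node .leaf 8052987041118617 .leaf) 8056992033125269 (.node .leaf 8069296480005449 (.node .leaf 8077434268019441 .leaf))) 8081198522896733 (.node (.node .leaf 8089336310910725 (.node .leaf 8101640757790905 .leaf)) 8105645749797557 (.node .leaf 8165765368797725 (.node .leaf 8169944500378713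 .leaf))))) 8173798768054517 (.node (.node (.node (.node .leaf 8186193333108297 .leaf) 8198058088700077 (.node .leaf 8210452653753857 (.node .leaf 8214306921429661 .leaf))) 8218486053010649 (.node (.node .leaf 8221392282853711 .leaf) 8225383990108155 (.node .leaf 8237396232368719 (.node .leaf 8245742113208743 .leaf)))) 8249583096132339 (.node (.node (.node .leaf 8257928976972363 .leaf) 8269941219232927 (.node .leaf 8273932926487371 (.node .leaf 8280149349308889 .leaf))) 8284146957568261 (.node (.node .leaf 8288015992738625 (.node .leaf 8300202464966373 .leaf)) 8312560134256521 (.node .leaf 8324746606484269 (.node .leaf 8328615641654633 .leaf))))))))) 8332613249914005 (.node (.node (.node (.node (.node (.node (.node (.node .leaf 8335215465101395 .leaf) 8339319336396191 (.node .leaf 8343548452725083 (.node .leaf 8355658196906527 .leaf))) 8367599680544611 (.node (.node .leaf 8379709424726055 .leaf) 8383938541054947 (.node .leaf 8388042412349743 (.node .leaf 8393972531556573 .leaf)))) 8398082303856297 (.node (.node (.node .leaf 8410366082236989 .leaf) 8418219049378645 (.node .leaf 8422476217954305 (.node .leaf 8430329185095961 .leaf))) 8442612963476653 (.node (.node .leaf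 8446722735776377 (.node .leaf 8449599445612559 .leaf)) 8453521793585739 (.node .leaf 8457765677409191 (.node .leaf 8469667328764603 .leaf))))) 8482101726101055 (.node (.node (.node (.node .leaf 8494003377456467 .leaf) 8498247261279919 (.node .leaf 8502169609253099 (.node .leaf 8562377773291667 .leaf))) 8566474260839183 (.node (.node .leaf 8578465834600259 .leaf) 8586526894567947 (.node .leaf 8590860791189911 (.node .leaf 8598921851157599 .leaf)))) 8610913424918675 (.node (.node (.node .leaf 8615009912466191 .leaf) 8625666195409861 (.node .leaf 8633908281788205 (.node .leaf 8637860051384889 .leaf))) 8641954574261333 (.node (.node .leaf 8645928389724769 (.node .leaf 8650022912601213 .leaf)) 8653974682197897 (.node .leaf 8662216768576241 (.node .leaf 8685876911382359 .leaf)))))) 8693944858186367 (.node (.node (.node (.node (.node .leaf 8698084052109595 .leaf) 8702172673981111 (.node .leaf 8706040226409123 (.node .leaf 8710128848280639 .leaf))) 8714268042203867 (.node (.node .leaf 8722335989007875 .leaf) 8737156251993416 (.node .leaf 8745070516972400 (.node .leaf 8749255466157180 .leaf)))) 8753220317746424 (.node (.node (.node .leaf 8765487860872444 .leaf) 8769452712461688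 (.node .leaf 8773637661646468 (.node .leaf 8781551926625452 .leaf))) 8790229859923486 (.node (.node .leaf 8802586444998866 (.node .leaf 8810572425466058 .leaf)) 8814575264025414 (.node .leaf 8818677757952946 (.node .leaf 8822680596512302 .leaf))))) 8830666576979494 (.node (.node (.node (.node .leaf 8843023162054874 .leaf) 8902645139889202 (.node .leaf 8906451394479886 (.node .leaf 8918752785482514 .leaf))) 8926772131897594 (.node (.node .leaf 8930942502364038 .leaf) 8938961848779118 (.node .leaf 8951263239781746 (.node .leaf 8955069494372430 .leaf)))) 8958046258104372 (.node (.node (.node .leaf 8970200666340888 .leaf) 8978453764665632 (.node .leaf 8982443318472780 (.node .leaf 8986345103321560 .leaf))) 8990334657128708 (.node (.node .leaf 8998587755453452 (.node .leaf 9010742163689968 .leaf)) 9017429056885678 (.node .leaf 9021399131783194 (.node .leaf 9033433404928270 .leaf))))))) 9041775943729958 (.node (.node (.node (.node (.node (.node .leaf 9045606886555122 .leaf) 9053949425356810 (.node .leaf 9065983698501886 (.node .leaf 9069953773399402 .leaf))) 9075246245406588 (.node (.node .leaf 9083378922479108 .leaf) 9087293803303872 (.node .leaf 9091308828417244 (.node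 .leaf 9103676733573760 .leaf)))) 9107691758687132 (.node (.node (.node .leaf 9111606639511896 .leaf) 9119739316584416 (.node .leaf 9135648811994406 (.node .leaf 9143713612528014 .leaf))) 9147897078970442 (.node (.node .leaf 9151982946107430 (.node .leaf 9163911061592170 .leaf)) 9167996928729158 (.node .leaf 9172180395171586 (.node .leaf 9180245195705194 .leaf))))) 9185366478640508 (.node (.node (.node (.node .leaf 9189495925617800 .leaf) 9201757477346044 (.node .leaf 9209613003454292 (.node .leaf 9213883735951232 .leaf))) 9221739262059480 (.node (.node .leaf 9234000813787724 .leaf) 9238130260765016 (.node .leaf 9244749277421814 (.node .leaf 9256891868666234 .leaf)))) 9264838009859042 (.node (.node (.node .leaf 9268945628711470 .leaf) 9273145519184794 (.node .leaf 9277253138037222 (.node .leaf 9285199279230030 .leaf))) 9297341870474450 (.node (.node .leaf 9300150395636984 (.node .leaf 9304443662921108 .leaf)) 9316438096791800 (.node .leaf 9324616815286656 (.node .leaf 9328548120142316 .leaf)))))) 9336726838637172 (.node (.node (.node (.node (.node .leaf 9348721272507864 .leaf) 9353014539791988 (.node .leaf 9412565675602700 (.node .leaf 9424506090008256 .leaf)))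 9432719349058616 (.node (.node .leaf 9436813683158836 .leaf) 9440812864553408 (.node .leaf 9444907198653628 (.node .leaf 9453120457703988 .leaf)))) 9465060872109544 (.node (.node (.node .leaf 9473738805407578 .leaf) 9482022018034722 (.node .leaf 9485935416117134 (.node .leaf 9490071456778250 .leaf))) 9502099934293486 (.node (.node .leaf 9506235974954602 (.node .leaf 9510149373037014 .leaf)) 9518432585664158 (.node .leaf 9535721456175083 (.node .leaf 9543844883212627 .leaf))))) 9547817215933711 (.node (.node (.node (.node .leaf 9551815328095755 .leaf) 9556057924944791 (.node .leaf 9560056037106835 (.node .leaf 9564028369827919 .leaf))) 9572151796865463 (.node (.node .leaf 9639258974722455 .leaf) 9651446538156683 (.node .leaf 9659432623998963 (.node .leaf 9663693420773743 .leaf)))) 9667484425941147 (.node (.node (.node .leaf 9671745222715927 .leaf) 9679731308558207 (.node .leaf 9691918871992435 (.node .leaf 9702870800013105 .leaf))) 9711010462305321 (.node (.node .leaf 9715148083093349 (.node .leaf 9719056167474641 .leaf)) 9723195466772957 (.node .leaf 9727103551154249 (.node .leaf 9731241171942277 .leaf)))))))) 9739380834234493 (.node (.node (.node (.node (.node (.node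 (.node .leaf 9754647970527811 .leaf) 9766819298707367 (.node .leaf 9775056267152527 (.node .leaf 9779058797577147 .leaf))) 9782944263770119 (.node (.node .leaf 9786946794194739 .leaf) 9795183762639899 (.node .leaf 9807355090819455 (.node .leaf 9809972352670477 .leaf)))) 9818107784477525 (.node (.node (.node .leaf 9821978392783089 .leaf) 9825996564166861 (.node .leaf 9846501775408649 (.node .leaf 9850519946792421 .leaf))) 9854390555097985 (.node (.node .leaf 9862525986905033 (.node .leaf 9867296423125583 .leaf)) 9875169170319895 (.node .leaf 9879392491018947 (.node .leaf 9883316216359391 .leaf))))) 9903726966575611 (.node (.node (.node (.node .leaf 9907650691916055 .leaf) 9911874012615107 (.node .leaf 9919746759809419 (.node .leaf 9922929246212697 .leaf))) 9931253585088641 (.node (.node .leaf 9935128611656781 .leaf) 9939306170102569 (.node .leaf 9959389309669605 (.node .leaf 9963566868115393 .leaf)))) 9967441894683533 (.node (.node (.node .leaf 9975766233559477 .leaf) 9980253316667803 (.node .leaf 9988314970931011 (.node .leaf 9992542709892639 .leaf))) 9996625822295099 (.node (.node .leaf 10016614500836567 (.node .leaf 10020697613239027 .leaf)) 10024925352200655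 (.node .leaf 10032987006463863 (.node .leaf 10035577698810469 .leaf)))))) 10047701803968361 (.node (.node (.node (.node (.node .leaf 10055664270808689 .leaf) 10059761262258877 (.node .leaf 10063974339101033 (.node .leaf 10068071330551221 .leaf))) 10076033797391549 (.node (.node .leaf 10088157902549441 .leaf) 10103551955395431 (.node .leaf 10111611924156639 (.node .leaf 10115572454867867 .leaf)))) 10119763892361383 (.node (.node (.node .leaf 10123723136098195 .leaf) 10127914573591711 (.node .leaf 10131875104302939 (.node .leaf 10139935073064147 .leaf))) 10150966694615825 (.node (.node .leaf 10163074564519045 (.node .leaf 10171287913962253 .leaf)) 10175126639062281 (.node .leaf 10179434176930005 (.node .leaf 10183272902030033 .leaf))))) 10191486251473241 (.node (.node (.node (.node .leaf 10203594121376461 .leaf) 10270701299233453 (.node .leaf 10278777503249333 (.node .leaf 10282903322027505 .leaf))) 10287004731740269 (.node (.node .leaf 10290860677926361 .leaf) 10294962087639125 (.node .leaf 10299087906417297 (.node .leaf 10307164110433177 .leaf)))) 10384151302777252 (.node (.node (.node .leaf 10392102757671180 .leaf) 10396250118413432 (.node .leaf 10400268884092724 (.node .leaf 10404372175075424 .leaf)))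 10408390940754716 (.node (.node .leaf 10412538301496968 (.node .leaf 10420489756390896 .leaf)) 10437555389492322 (.node .leaf 10445736569569210 (.node .leaf 10449876945091766 .leaf))))))) 10453743903224258 (.node (.node (.node (.node (.node (.node .leaf 10466020508607846 .leaf) 10469887466740338 (.node .leaf 10474027842262894 (.node .leaf 10482209022339782 .leaf))) 10500061250615664 (.node (.node .leaf 10508191278328744 .leaf) 10512331255323716 (.node .leaf 10516233438700080 (.node .leaf 10520389853709372 .leaf)))) 10524292037085736 (.node (.node (.node .leaf 10528432014080708 .leaf) 10536562041793788 (.node .leaf 10550801537151694 (.node .leaf 10554638884884458 .leaf))) 10558804144409430 (.node (.node .leaf 10571020633555018 (.node .leaf 10574940918473750 .leaf)) 10587157407619338 (.node .leaf 10591322667144310 (.node .leaf 10595160014877074 .leaf))))) 10608555064098992 (.node (.node (.node (.node .leaf 10612672814441516 .leaf) 10616565055104008 (.node .leaf 10628926163817052 (.node .leaf 10632737250180136 .leaf))) 10645098358893180 (.node (.node .leaf 10648990599555672 .leaf) 10653108349898196 (.node .leaf 10665858481036850 (.node .leaf 10673985054344794 .leaf)))) 10677915869281206 (.node (.node (.node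 .leaf 10681911226708722 .leaf) 10694297030647958 (.node .leaf 10698292388075474 (.node .leaf 10702223203011886 .leaf))) 10710349776319830 (.node (.node .leaf 10719894494773100 (.node .leaf 10727967944054452 .leaf)) 10732134889081424 (.node .leaf 10736239445064588 (.node .leaf 10748150053302480 .leaf)))))) 10752254609285644 (.node (.node (.node (.node (.node .leaf 10756421554312616 .leaf) 10764495003593968 (.node .leaf 10777197911710958 (.node .leaf 10781179879011178 .leaf))) 10785387943295238 (.node (.node .leaf 10797324029831066 .leaf) 10801610311895494 (.node .leaf 10813546398431322 (.node .leaf 10817754462715382 .leaf)))) 10821736430015602 (.node (.node (.node .leaf 10834951438658256 .leaf) 10839213808568236 (.node .leaf 10843148853989816 (.node .leaf 10855229560093100 .leaf))) 10859406643601880 (.node (.node .leaf 10871487349705164 (.node .leaf 10875422395126744 .leaf)) 10879684765036724 (.node .leaf 10893791442837030 (.node .leaf 10901859480033886 .leaf))))) 10905819416449594 (.node (.node (.node (.node .leaf 10910016754948038 .leaf) 10913957708366258 (.node .leaf 10918155046864702 (.node .leaf 10922114983280410 .leaf))) 10930183020477266 (.node (.node .leaf 10948197586317628 (.node .leaf 10956216428830036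 .leaf)) 10960173813270864 (.node .leaf 10964406768549052 (.node .leaf 10976426575342592 .leaf)))) 10980659530620780 (.node (.node (.node .leaf 10984616915061608 .leaf) 10992635757574016 (.node .leaf 11009701390675442 (.node .leaf 11017948000691450 .leaf))) 11021900553359878 (.node (.node .leaf 11025981309555394 (.node .leaf 11029975387000206 .leaf)) 11034056143195722 (.node .leaf 11038008695864150 (.node .leaf 11046255305880158 .leaf)))))))))))

def genA : Equiv.Perm (Fin 14) := c[0, 1, 2, 3, 4, 5, 6] * c[13, 12, 11, 10, 9, 8, 7]
def genB : Equiv.Perm (Fin 14) := c[0, 3, 6, 8, 13, 10, 7, 5] * c[1, 4, 12, 9]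

lemma encA (x : Equiv.Perm (Fin 14)) :
    enc ⇑(x * genA) = stepA (enc ⇑x) := by
  have e0 : (x * genA) 0 = x 1 := by rw [Equiv.Perm.mul_apply]; congr 1 <;> decide
  have e1 : (x * genA) 1 = x 2 := by rw [Equiv.Perm.mul_apply]; congr 1 <;> decide
  have e2 : (x * genA) 2 = x 3 := by rw [Equiv.Perm.mul_apply]; congr 1 <;> decide
  have e3 : (x * genA) 3 = x 4 := by rw [Equiv.Perm.mul_apply]; congr 1 <;> decide
  have e4 : (x * genA) 4 = x 5 := by rw [Equiv.Perm.mul_apply]; congr 1 <;> decide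
  have e5 : (x * genA) 5 = x 6 := by rw [Equiv.Perm.mul_apply]; congr 1 <;> decide
  have e6 : (x * genA) 6 = x 0 := by rw [Equiv.Perm.mul_apply]; congr 1 <;> decide
  have e7 : (x * genA) 7 = x 13 := by rw [Equiv.Perm.mul_apply]; congr 1 <;> decide
  have e8 : (x * genA) 8 = x 7 := by rw [Equiv.Perm.mul_apply]; congr 1 <;> decide
  have e9 : (x * genA) 9 = x 8 := by rw [Equiv.Perm.mul_apply]; congr 1 <;> decide
  have e10 : (x * genA) 10 = x 9 := by rw [Equiv.Perm.mul_apply]; congr 1 <;> decide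
  have e11 : (x * genA) 11 = x 10 := by rw [Equiv.Perm.mul_apply]; congr 1 <;> decide
  have e12 : (x * genA) 12 = x 11 := by rw [Equiv.Perm.mul_apply]; congr 1 <;> decide
  have e13 : (x * genA) 13 = x 12 := by rw [Equiv.Perm.mul_apply]; congr 1 <;> decide
  unfold stepA; rw [d0, d1, d2, d3, d4, d5, d6, d7, d8, d9, d10, d11, d12, d13]
  unfold enc; rw [e0, e1, e2, e3, e4, e5, e6, e7, e8, e9, e10, e11, e12, e13]

lemma encB (x : Equiv.Perm (Fin 14)) :
    enc ⇑(x * genB) = stepB (enc ⇑x) := by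
  have e0 : (x * genB) 0 = x 3 := by rw [Equiv.Perm.mul_apply]; congr 1 <;> decide
  have e1 : (x * genB) 1 = x 4 := by rw [Equiv.Perm.mul_apply]; congr 1 <;> decide
  have e2 : (x * genB) 2 = x 2 := by rw [Equiv.Perm.mul_apply]; congr 1 <;> decide
  have e3 : (x * genB) 3 = x 6 := by rw [Equiv.Perm.mul_apply]; congr 1 <;> decide
  have e4 : (x * genB) 4 = x 12 := by rw [Equiv.Perm.mul_apply]; congr 1 <;> decide
  have e5 : (x * genB) 5 = x 0 := by rw [Equiv.Perm.mul_apply]; congr 1 <;> decide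
  have e6 : (x * genB) 6 = x 8 := by rw [Equiv.Perm.mul_apply]; congr 1 <;> decide
  have e7 : (x * genB) 7 = x 5 := by rw [Equiv.Perm.mul_apply]; congr 1 <;> decide
  have e8 : (x * genB) 8 = x 13 := by rw [Equiv.Perm.mul_apply]; congr 1 <;> decide
  have e9 : (x * genB) 9 = x 1 := by rw [Equiv.Perm.mul_apply]; congr 1 <;> decide
  have e10 : (x * genB) 10 = x 7 := by rw [Equiv.Perm.mul_apply]; congr 1 <;> decide
  have e11 : (x * genB) 11 = x 11 := by rw [Equiv.Perm.mul_apply]; congr 1 <;> decide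
  have e12 : (x * genB) 12 = x 9 := by rw [Equiv.Perm.mul_apply]; congr 1 <;> decide
  have e13 : (x * genB) 13 = x 10 := by rw [Equiv.Perm.mul_apply]; congr 1 <;> decide
  unfold stepB; rw [d0, d1, d2, d3, d4, d5, d6, d7, d8, d9, d10, d11, d12, d13]
  unfold enc; rw [e0, e1, e2, e3, e4, e5, e6, e7, e8, e9, e10, e11, e12, e13]

lemma encAi (x : Equiv.Perm (Fin 14)) :
    enc ⇑(x * genA⁻¹) = stepAi (enc ⇑x) := by
  have e0 : (x * genA⁻¹) 0 = x 6 := by rw [Equiv.Perm.mul_apply]; congr 1 <;> decide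
  have e1 : (x * genA⁻¹) 1 = x 0 := by rw [Equiv.Perm.mul_apply]; congr 1 <;> decide
  have e2 : (x * genA⁻¹) 2 = x 1 := by rw [Equiv.Perm.mul_apply]; congr 1 <;> decide
  have e3 : (x * genA⁻¹) 3 = x 2 := by rw [Equiv.Perm.mul_apply]; congr 1 <;> decide
  have e4 : (x * genA⁻¹) 4 = x 3 := by rw [Equiv.Perm.mul_apply]; congr 1 <;> decide
  have e5 : (x * genA⁻¹) 5 = x 4 := by rw [Equiv.Perm.mul_apply]; congr 1 <;> decide
  have e6 : (x * genA⁻¹) 6 = x 5 := by rw [Equiv.Perm.mul_apply]; congr 1 <;> decide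
  have e7 : (x * genA⁻¹) 7 = x 8 := by rw [Equiv.Perm.mul_apply]; congr 1 <;> decide
  have e8 : (x * genA⁻¹) 8 = x 9 := by rw [Equiv.Perm.mul_apply]; congr 1 <;> decide
  have e9 : (x * genA⁻¹) 9 = x 10 := by rw [Equiv.Perm.mul_apply]; congr 1 <;> decide
  have e10 : (x * genA⁻¹) 10 = x 11 := by rw [Equiv.Perm.mul_apply]; congr 1 <;> decide
  have e11 : (x * genA⁻¹) 11 = x 12 := by rw [Equiv.Perm.mul_apply]; congr 1 <;> decide
  have e12 : (x * genA⁻¹) 12 = x 13 := by rw [Equiv.Perm.mul_apply]; congr 1 <;> decide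
  have e13 : (x * genA⁻¹) 13 = x 7 := by rw [Equiv.Perm.mul_apply]; congr 1 <;> decide
  unfold stepAi; rw [d0, d1, d2, d3, d4, d5, d6, d7, d8, d9, d10, d11, d12, d13]
  unfold enc; rw [e0, e1, e2, e3, e4, e5, e6, e7, e8, e9, e10, e11, e12, e13]

lemma encBi (x : Equiv.Perm (Fin 14)) :
    enc ⇑(x * genB⁻¹) = stepBi (enc ⇑x) := by
  have e0 : (x * genB⁻¹) 0 = x 5 := by rw [Equiv.Perm.mul_apply]; congr 1 <;> decide
  have e1 : (x * genB⁻¹) 1 = x 9 := by rw [Equiv.Perm.mul_apply]; congr 1 <;> decide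
  have e2 : (x * genB⁻¹) 2 = x 2 := by rw [Equiv.Perm.mul_apply]; congr 1 <;> decide
  have e3 : (x * genB⁻¹) 3 = x 0 := by rw [Equiv.Perm.mul_apply]; congr 1 <;> decide
  have e4 : (x * genB⁻¹) 4 = x 1 := by rw [Equiv.Perm.mul_apply]; congr 1 <;> decide
  have e5 : (x * genB⁻¹) 5 = x 7 := by rw [Equiv.Perm.mul_apply]; congr 1 <;> decide
  have e6 : (x * genB⁻¹) 6 = x 3 := by rw [Equiv.Perm.mul_apply]; congr 1 <;> decide
  have e7 : (x * genB⁻¹) 7 = x 10 := by rw [Equiv.Perm.mul_apply]; congr 1 <;> decide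
  have e8 : (x * genB⁻¹) 8 = x 6 := by rw [Equiv.Perm.mul_apply]; congr 1 <;> decide
  have e9 : (x * genB⁻¹) 9 = x 12 := by rw [Equiv.Perm.mul_apply]; congr 1 <;> decide
  have e10 : (x * genB⁻¹) 10 = x 13 := by rw [Equiv.Perm.mul_apply]; congr 1 <;> decide
  have e11 : (x * genB⁻¹) 11 = x 11 := by rw [Equiv.Perm.mul_apply]; congr 1 <;> decide
  have e12 : (x * genB⁻¹) 12 = x 4 := by rw [Equiv.Perm.mul_apply]; congr 1 <;> decide
  have e13 : (x * genB⁻¹) 13 = x 8 := by rw [Equiv.Perm.mul_apply]; congr 1 <;> decide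
  unfold stepBi; rw [d0, d1, d2, d3, d4, d5, d6, d7, d8, d9, d10, d11, d12, d13]
  unfold enc; rw [e0, e1, e2, e3, e4, e5, e6, e7, e8, e9, e10, e11, e12, e13]

set_option maxRecDepth 10000 in
lemma closA : tall (fun c => mem (stepA c) t) t = true := by decide

set_option maxRecDepth 10000 in
lemma closB : tall (fun c => mem (stepB c) t) t = true := by decide

set_option maxRecDepth 10000 in
lemma closAi : tall (fun c => mem (stepAi c) t) t = true := by decide

set_option maxRecDepth 10000 in
lemma closBi : tall (fun c => mem (stepBi c) t) t = true := by decide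

def nfix (c : ℕ) : ℕ := (Finset.univ.filter fun x : Fin 14 => d c x.val = x.val).card

set_option maxRecDepth 10000 in
lemma count_eq (h : Equiv.Perm (Fin 14)) :
    (Finset.univ.filter fun x : Fin 14 => h x = x).card = nfix (enc ⇑h) := by
  unfold nfix
  refine congrArg Finset.card (Finset.filter_congr ?_)
  intro x _
  have hd : d (enc ⇑h) x.val = (h x).val := by
    fin_cases x
    exacts [d0 h, d1 h, d2 h, d3 h, d4 h, d5 h, d6 h, d7 h, d8 h, d9 h, d10 h, d11 h, d12 h, d13 h]
  rw [Fin.ext_iff, hd]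

set_option maxRecDepth 10000 in
lemma finOK : tall (fun c => decide (nfix c = 0 ∨ nfix c = 2 ∨ nfix c = 6 ∨ nfix c = 14)) t = true := by
  decide

end HFP

open HFP in
theorem H_fixedPoints :
    ∀ h ∈ H, (Finset.univ.filter fun x : Fin 14 => h x = x).card ∈
      ({0, 2, 6, 14} : Set ℕ) := by
  intro h hh
  have hh' : h ∈ Subgroup.closure Hgens := hh
  clear hh
  have key : mem (enc ⇑h) t = true := by
    induction hh' using Subgroup.closure_induction_right with
    | one => decide
    | mul_right x hx y hy ih =>
      simp only [Hgens, Set.mem_insert_iff, Set.mem_singleton_iff] at hy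
      rcases hy with rfl | rfl
      · show mem (enc ⇑(x * genA)) t = true
        rw [encA x]; exact tall_imp _ t closA _ ih
      · show mem (enc ⇑(x * genB)) t = true
        rw [encB x]; exact tall_imp _ t closB _ ih
    | mul_inv_cancel x hx y hy ih =>
      simp only [Hgens, Set.mem_insert_iff, Set.mem_singleton_iff] at hy
      rcases hy with rfl | rfl
      · show mem (enc ⇑(x * genA⁻¹)) t = true
        rw [encAi x]; exact tall_imp _ t closAi _ ih
      · show mem (enc ⇑(x * genB⁻¹)) t = true
        rw [encBi x]; exact tall_imp _ t closBi _ ih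
  have h4 := of_decide_eq_true (tall_imp _ t finOK _ key)
  rw [count_eq h]
  rcases h4 with e | e | e | e <;> rw [e] <;> simp
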